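/- Let f_1,…,f_ℓ with ℓ-th root h (h^ℓ = f_1⋯f_ℓ) and F_1,…,F_ℓ with ℓ-th root H (H^ℓ = F_1⋯F_ℓ) be as in the context, and let q_i ∈ K[[t]] satisfy f_i = q_i·h for i = 1,…,ℓ. Then the matrix product of the derivative arrays (h′; f_1,…,f_ℓ) and (H′; F_1,…,F_ℓ) (where ′ denotes formal derivative) equals the multiple Riordan array ( (H(h))′; q_1·F_1(h), …, q_ℓ·F_ℓ(h) ), and moreover (q_1 F_1(h))·(q_2 F_2(h))⋯(q_ℓ F_ℓ(h)) = (H(h))^ℓ. Hence the product of two derivative arrays is again a derivative array (the derivative arrays form a subgroup of the multiple Riordan group). -/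

import Mathlib

open PowerSeries Finset

/-- Formal substitution `F(u)`: for `u` with zero constant term, the `n`-th coefficient of
`F(u)` is `∑_{k ≤ n} F_k · [t^n] u^k`. -/
noncomputable def psComp {K : Type*} [CommRing K] (F u : K⟦X⟧) : K⟦X⟧ :=
  PowerSeries.mk fun n => ∑ k ∈ Finset.range (n + 1), coeff k F * coeff n (u ^ k)

/-- Entry `d_{n,k}` of the multiple Riordan array `(g; f_0, …, f_{ℓ-1})`: the `k`-th column,
`k = qℓ + m`, has generating function `g · f_0⋯f_{m-1} · (f_0⋯f_{ℓ-1})^q`. -/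
noncomputable def mrEntry {K : Type*} [CommRing K] (ℓ : ℕ) (g : K⟦X⟧) (f : ℕ → K⟦X⟧)
    (n k : ℕ) : K :=
  coeff n (g * (∏ i ∈ Finset.range (k % ℓ), f i) * (∏ i ∈ Finset.range ℓ, f i) ^ (k / ℓ))

namespace PsAux
variable {K : Type*} [CommRing K]

lemma coeff_pow_eq_zero {u : K⟦X⟧} (hu : constantCoeff u = 0) {n j : ℕ} (hnj : n < j) :
    coeff n (u ^ j) = 0 := by
  have hX : (X : K⟦X⟧) ∣ u := X_dvd_iff.mpr hu
  exact X_pow_dvd_iff.mp (pow_dvd_pow_of_dvd hX j) n hnj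

lemma coeff_psComp_eq {u : K⟦X⟧} (hu : constantCoeff u = 0) (G : K⟦X⟧) {n N : ℕ}
    (hn : n < N) :
    coeff n (psComp G u) = coeff n (∑ j ∈ range N, C (coeff j G) * u ^ j) := by
  rw [psComp, coeff_mk, map_sum]
  simp only [coeff_C_mul]
  refine Finset.sum_subset (range_subset_range.mpr hn) fun j _ hjn => ?_
  have : n < j := by simp only [mem_range] at hjn; omega
  rw [coeff_pow_eq_zero hu this, mul_zero]

lemma coeff_mul_psComp {u : K⟦X⟧} (hu : constantCoeff u = 0) (A G : K⟦X⟧) (n : ℕ) :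
    coeff n (A * psComp G u) = ∑ j ∈ range (n + 1), coeff j G * coeff n (A * u ^ j) := by
  have step : coeff n (A * psComp G u)
      = coeff n (A * ∑ j ∈ range (n + 1), C (coeff j G) * u ^ j) := by
    rw [coeff_mul, coeff_mul]
    refine Finset.sum_congr rfl fun p hp => ?_
    have hp2 : p.2 ≤ n := by
      have := Finset.HasAntidiagonal.mem_antidiagonal.mp hp; omega
    rw [coeff_psComp_eq hu G (Nat.lt_succ_of_le hp2)]
  rw [step, Finset.mul_sum, map_sum]
  refine Finset.sum_congr rfl fun j _ => ?_
  rw [mul_left_comm, coeff_C_mul]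

lemma psComp_mul {u : K⟦X⟧} (hu : constantCoeff u = 0) (A B : K⟦X⟧) :
    psComp (A * B) u = psComp A u * psComp B u := by
  ext n
  have hR : coeff n (psComp A u * psComp B u)
      = ∑ j ∈ range (n + 1), ∑ i ∈ range (n + 1),
          coeff i A * coeff j B * coeff n (u ^ (i + j)) := by
    rw [coeff_mul_psComp hu (psComp A u) B n]
    refine Finset.sum_congr rfl fun j _ => ?_
    rw [mul_comm (psComp A u), coeff_mul_psComp hu (u ^ j) A n, Finset.mul_sum]
    refine Finset.sum_congr rfl fun i _ => ?_
    rw [← pow_add, add_comm j i]; ring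
  rw [hR]
  rw [show coeff n (psComp (A * B) u)
      = ∑ k ∈ range (n + 1), coeff k (A * B) * coeff n (u ^ k) by
    rw [psComp, coeff_mk]]
  have hL : ∑ k ∈ range (n + 1), coeff k (A * B) * coeff n (u ^ k)
      = ∑ k ∈ range (n + 1), ∑ p ∈ Finset.HasAntidiagonal.antidiagonal k,
          coeff p.1 A * coeff p.2 B * coeff n (u ^ (p.1 + p.2)) := by
    refine Finset.sum_congr rfl fun k _ => ?_
    rw [coeff_mul, Finset.sum_mul]
    refine Finset.sum_congr rfl fun p hp => ?_
    rw [Finset.HasAntidiagonal.mem_antidiagonal.mp hp]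
  rw [hL]
  have hdisj : (↑(range (n + 1)) : Set ℕ).PairwiseDisjoint
      (fun k => (Finset.HasAntidiagonal.antidiagonal k : Finset (ℕ × ℕ))) := by
    intro a _ b _ hab
    refine Finset.disjoint_left.mpr fun p hpa hpb => ?_
    rw [Finset.HasAntidiagonal.mem_antidiagonal] at hpa hpb
    exact hab (hpa ▸ hpb ▸ rfl)
  rw [← Finset.sum_biUnion hdisj]
  have hsub : (range (n + 1)).biUnion (fun k => Finset.HasAntidiagonal.antidiagonal k)
      ⊆ range (n + 1) ×ˢ range (n + 1) := by
    intro p hp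
    rw [Finset.mem_biUnion] at hp
    obtain ⟨k, hk, hpk⟩ := hp
    rw [Finset.HasAntidiagonal.mem_antidiagonal] at hpk
    rw [mem_range] at hk
    rw [Finset.mem_product, mem_range, mem_range]
    omega
  rw [Finset.sum_subset hsub ?vanish]
  case vanish =>
    intro p hp hnp
    have : n < p.1 + p.2 := by
      by_contra hx
      apply hnp
      rw [Finset.mem_biUnion]
      exact ⟨p.1 + p.2, mem_range.mpr (by omega), Finset.HasAntidiagonal.mem_antidiagonal.mpr rfl⟩
    rw [coeff_pow_eq_zero hu this, mul_zero]
  rw [Finset.sum_product]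
  exact Finset.sum_comm

lemma psComp_add (u A B : K⟦X⟧) : psComp (A + B) u = psComp A u + psComp B u := by
  ext n
  simp [psComp, coeff_mk, add_mul, Finset.sum_add_distrib]

lemma psComp_C (u : K⟦X⟧) (c : K) : psComp (C c) u = C c := by
  ext n
  rw [psComp, coeff_mk]
  simp [coeff_C, coeff_one, ite_mul, zero_mul, Finset.sum_ite_eq', coeff_C]

noncomputable def psCompRH (u : K⟦X⟧) (hu : constantCoeff u = 0) : K⟦X⟧ →+* K⟦X⟧ where
  toFun F := psComp F u
  map_one' := by show psComp _ u = _; rw [← map_one (C), psComp_C, map_one]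
  map_mul' A B := psComp_mul hu A B
  map_zero' := by show psComp _ u = _; rw [← map_zero (C), psComp_C, map_zero]
  map_add' A B := psComp_add u A B

lemma coeff_derivativeFun' (f : K⟦X⟧) (n : ℕ) :
    coeff n (derivativeFun f) = coeff (n + 1) f * (n + 1) := coeff_derivative f n

lemma derivFun_pow (u : K⟦X⟧) (k : ℕ) :
    derivativeFun (u ^ (k + 1)) = (k + 1) • (u ^ k * derivativeFun u) := by
  induction k with
  | zero => simp
  | succ k ih =>
    rw [pow_succ, derivativeFun_mul, ih]
    simp only [smul_eq_mul, nsmul_eq_mul]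
    push_cast
    ring

lemma psComp_deriv {u : K⟦X⟧} (hu : constantCoeff u = 0) (G : K⟦X⟧) :
    derivativeFun (psComp G u) = psComp (derivativeFun G) u * derivativeFun u := by
  ext n
  rw [coeff_derivativeFun', coeff_psComp_eq hu G (show n + 1 < n + 2 by omega), map_sum,
    Finset.sum_mul]
  rw [mul_comm (psComp (derivativeFun G) u), coeff_mul_psComp hu (derivativeFun u) G.derivativeFun n]
  rw [Finset.sum_range_succ']
  have h0term : coeff (n + 1) (C (coeff 0 G) * u ^ 0) * ((n : K) + 1) = 0 := by
    simp [coeff_one, coeff_C_mul]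
  rw [h0term, add_zero]
  refine Finset.sum_congr rfl fun i _ => ?_
  rw [coeff_C_mul, coeff_derivativeFun']
  have : coeff (n + 1) (u ^ (i + 1)) * ((n : K) + 1) = coeff n (derivativeFun (u ^ (i + 1))) := by
    rw [coeff_derivativeFun']
  rw [mul_assoc, this, derivFun_pow, map_nsmul, nsmul_eq_mul]
  push_cast
  rw [mul_comm (derivativeFun u) (u ^ i)]
  ring

lemma mul_supp {ℓ r s : ℕ} {A B : K⟦X⟧} (hA : ∀ a, a % ℓ ≠ r % ℓ → coeff a A = 0)
    (hB : ∀ b, b % ℓ ≠ s % ℓ → coeff b B = 0) :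
    ∀ c, c % ℓ ≠ (r + s) % ℓ → coeff c (A * B) = 0 := by
  intro c hc
  rw [coeff_mul]
  refine Finset.sum_eq_zero fun p hp => ?_
  rcases eq_or_ne (coeff p.1 A) 0 with h1 | h1
  · rw [h1, zero_mul]
  rcases eq_or_ne (coeff p.2 B) 0 with h2 | h2
  · rw [h2, mul_zero]
  exfalso
  have e1 : p.1 % ℓ = r % ℓ := by by_contra hx; exact h1 (hA _ hx)
  have e2 : p.2 % ℓ = s % ℓ := by by_contra hx; exact h2 (hB _ hx)
  have hps := Finset.HasAntidiagonal.mem_antidiagonal.mp hp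
  exact hc (by rw [← hps, Nat.add_mod, e1, e2, ← Nat.add_mod])

lemma prod_supp {ℓ : ℕ} (F : ℕ → K⟦X⟧) (m : ℕ)
    (hF : ∀ i < m, ∀ a, a % ℓ ≠ 1 % ℓ → coeff a (F i) = 0) :
    ∀ c, c % ℓ ≠ m % ℓ → coeff c (∏ i ∈ range m, F i) = 0 := by
  induction m with
  | zero =>
    intro c hc
    rw [range_zero, prod_empty, coeff_one, if_neg]
    rintro rfl; exact hc rfl
  | succ m ih =>
    intro c hc
    rw [prod_range_succ]
    exact mul_supp (ih fun i hi => hF i (by omega)) (fun b hb => hF m (by omega) b hb) c hc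

lemma pow_supp {ℓ : ℕ} {A : K⟦X⟧} (hA : ∀ a, a % ℓ ≠ 0 % ℓ → coeff a A = 0) (qq : ℕ) :
    ∀ c, c % ℓ ≠ 0 % ℓ → coeff c (A ^ qq) = 0 := by
  induction qq with
  | zero =>
    intro c hc
    rw [pow_zero, coeff_one, if_neg]
    rintro rfl; exact hc rfl
  | succ qq ih =>
    intro c hc
    rw [pow_succ]
    exact mul_supp ih hA c hc

lemma deriv_supp {ℓ : ℕ} {A : K⟦X⟧} (hA : ∀ a, a % ℓ ≠ 1 → coeff a A = 0) :
    ∀ c, c % ℓ ≠ 0 % ℓ → coeff c (derivativeFun A) = 0 := by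
  intro c hc
  rw [coeff_derivativeFun']
  rcases eq_or_ne ((c + 1) % ℓ) 1 with h1 | h1
  · exfalso
    apply hc
    have hd := Nat.div_add_mod (c + 1) ℓ
    rw [h1] at hd
    have hcc : c = ℓ * ((c + 1) / ℓ) := by omega
    rw [Nat.zero_mod, hcc, Nat.mul_mod_right]
  · rw [hA _ h1, zero_mul]

end PsAux

open PsAux

/-- The product of two derivative arrays is a derivative array: the derivative arrays form
a subgroup of the multiple Riordan group. -/
theorem stmt4 {K : Type*} [Field K] [CharZero K] (ℓ : ℕ) (hℓ : 2 ≤ ℓ)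
    (f F : ℕ → K⟦X⟧)
    (hf : ∀ i < ℓ, ∀ n, n % ℓ ≠ 1 → coeff n (f i) = 0)
    (hf1 : ∀ i < ℓ, coeff 1 (f i) ≠ 0)
    (hF : ∀ i < ℓ, ∀ n, n % ℓ ≠ 1 → coeff n (F i) = 0)
    (hF1 : ∀ i < ℓ, coeff 1 (F i) ≠ 0)
    (h : K⟦X⟧) (hhs : ∀ n, n % ℓ ≠ 1 → coeff n h = 0) (hh1 : coeff 1 h ≠ 0)
    (hhl : h ^ ℓ = ∏ i ∈ Finset.range ℓ, f i)
    (H : K⟦X⟧) (hHs : ∀ n, n % ℓ ≠ 1 → coeff n H = 0) (hH1 : coeff 1 H ≠ 0)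
    (hHl : H ^ ℓ = ∏ i ∈ Finset.range ℓ, F i)
    (q : ℕ → K⟦X⟧) (hq : ∀ i < ℓ, f i = q i * h)
    (d e : ℕ → ℕ → K)
    (hd : ∀ n k, d n k = mrEntry ℓ (PowerSeries.derivativeFun h) f n k)
    (he : ∀ n k, e n k = mrEntry ℓ (PowerSeries.derivativeFun H) F n k) :
    (∀ n k, ∑ j ∈ Finset.range (n + 1), d n j * e j k
      = mrEntry ℓ (PowerSeries.derivativeFun (psComp H h))
          (fun i => q i * psComp (F i) h) n k) ∧
    ∏ i ∈ Finset.range ℓ, (q i * psComp (F i) h) = (psComp H h) ^ ℓ := by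
  have hℓ0 : 0 < ℓ := by omega
  have h1m : 1 % ℓ = 1 := Nat.mod_eq_of_lt (by omega)
  have h0 : constantCoeff h = 0 := by
    rw [← coeff_zero_eq_constantCoeff_apply]
    exact hhs 0 (by rw [Nat.zero_mod]; omega)
  have hprodq : ∏ i ∈ Finset.range ℓ, q i = 1 := by
    have h1 : ∏ i ∈ Finset.range ℓ, f i = (∏ i ∈ Finset.range ℓ, q i) * h ^ ℓ := by
      rw [Finset.prod_congr rfl fun i hi => hq i (Finset.mem_range.mp hi),
        Finset.prod_mul_distrib, Finset.prod_const, Finset.card_range]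
    have hne : h ^ ℓ ≠ 0 := pow_ne_zero _ fun hh => hh1 (by rw [hh, map_zero])
    exact (mul_right_cancel₀ hne ((one_mul _).trans (hhl.trans h1))).symm
  have part2 : ∏ i ∈ Finset.range ℓ, (q i * psComp (F i) h) = (psComp H h) ^ ℓ := by
    rw [Finset.prod_mul_distrib, hprodq, one_mul]
    calc ∏ i ∈ Finset.range ℓ, psComp (F i) h
        = ∏ i ∈ Finset.range ℓ, (psCompRH h h0) (F i) := rfl
      _ = (psCompRH h h0) (∏ i ∈ Finset.range ℓ, F i) := (map_prod _ _ _).symm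
      _ = (psCompRH h h0) (H ^ ℓ) := by rw [hHl]
      _ = (psComp H h) ^ ℓ := map_pow _ _ _
  refine ⟨fun n k => ?_, part2⟩
  have hmlt : k % ℓ < ℓ := Nat.mod_lt _ hℓ0
  set G : K⟦X⟧ := PowerSeries.derivativeFun H * (∏ i ∈ Finset.range (k % ℓ), F i)
      * (∏ i ∈ Finset.range ℓ, F i) ^ (k / ℓ) with hGdef
  -- support of G
  have hH'supp : ∀ a, a % ℓ ≠ 0 % ℓ → coeff a (PowerSeries.derivativeFun H) = 0 :=
    deriv_supp hHs
  have hPmsupp : ∀ c, c % ℓ ≠ (k % ℓ) % ℓ → coeff c (∏ i ∈ Finset.range (k % ℓ), F i) = 0 :=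
    prod_supp F (k % ℓ) fun i hi a ha => hF i (hi.trans hmlt) a (by rwa [h1m] at ha)
  have hQsupp : ∀ c, c % ℓ ≠ 0 % ℓ → coeff c (∏ i ∈ Finset.range ℓ, F i) = 0 := by
    intro c hc
    refine prod_supp F ℓ (fun i hi a ha => hF i hi a (by rwa [h1m] at ha)) c ?_
    rwa [Nat.mod_self, ← Nat.zero_mod ℓ]
  have hGsupp : ∀ j, j % ℓ ≠ k % ℓ → coeff j G = 0 := by
    intro j hj
    refine mul_supp (mul_supp hH'supp hPmsupp) (pow_supp hQsupp (k / ℓ)) j ?_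
    simpa [Nat.mod_eq_of_lt hmlt] using hj
  -- d n j for j in the support
  have hdnj : ∀ j, j % ℓ = k % ℓ →
      d n j = coeff n (PowerSeries.derivativeFun h * (∏ i ∈ Finset.range (k % ℓ), q i) * h ^ j) := by
    intro j hj
    rw [hd, mrEntry, hj]
    have e1 : ∏ i ∈ Finset.range (k % ℓ), f i
        = (∏ i ∈ Finset.range (k % ℓ), q i) * h ^ (k % ℓ) := by
      rw [Finset.prod_congr rfl fun i hi => hq i ((Finset.mem_range.mp hi).trans hmlt),
        Finset.prod_mul_distrib, Finset.prod_const, Finset.card_range]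
    have e2 : k % ℓ + ℓ * (j / ℓ) = j := by rw [← hj]; exact Nat.mod_add_div j ℓ
    rw [e1, ← hhl, ← pow_mul]
    conv_rhs => rw [← e2]
    rw [pow_add]
    ring
  -- the sum
  have hsum : ∑ j ∈ Finset.range (n + 1), d n j * e j k
      = ∑ j ∈ Finset.range (n + 1), coeff j G
          * coeff n (PowerSeries.derivativeFun h * (∏ i ∈ Finset.range (k % ℓ), q i) * h ^ j) := by
    refine Finset.sum_congr rfl fun j _ => ?_
    have heG : e j k = coeff j G := by rw [he, mrEntry, hGdef]
    rcases eq_or_ne (coeff j G) 0 with hz | hz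
    · rw [heG, hz, mul_zero, zero_mul]
    · have hjm : j % ℓ = k % ℓ := by
        by_contra hx
        exact hz (hGsupp j hx)
      rw [heG, hdnj j hjm, mul_comm]
  rw [hsum]
  rw [← coeff_mul_psComp h0 (PowerSeries.derivativeFun h * ∏ i ∈ Finset.range (k % ℓ), q i) G n]
  -- now identify the series
  have c1 : PowerSeries.derivativeFun (psComp H h)
      = psComp (PowerSeries.derivativeFun H) h * PowerSeries.derivativeFun h := psComp_deriv h0 H
  have c2 : ∏ i ∈ Finset.range (k % ℓ), (q i * psComp (F i) h)
      = (∏ i ∈ Finset.range (k % ℓ), q i) * psComp (∏ i ∈ Finset.range (k % ℓ), F i) h := by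
    rw [Finset.prod_mul_distrib]
    congr 1
    calc ∏ i ∈ Finset.range (k % ℓ), psComp (F i) h
        = ∏ i ∈ Finset.range (k % ℓ), (psCompRH h h0) (F i) := rfl
      _ = (psCompRH h h0) (∏ i ∈ Finset.range (k % ℓ), F i) := (map_prod _ _ _).symm
  have c3 : ∏ i ∈ Finset.range ℓ, (q i * psComp (F i) h)
      = psComp (∏ i ∈ Finset.range ℓ, F i) h := by
    rw [Finset.prod_mul_distrib, hprodq, one_mul]
    calc ∏ i ∈ Finset.range ℓ, psComp (F i) h
        = ∏ i ∈ Finset.range ℓ, (psCompRH h h0) (F i) := rfl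
      _ = (psCompRH h h0) (∏ i ∈ Finset.range ℓ, F i) := (map_prod _ _ _).symm
  have c4 : psComp G h = psComp (PowerSeries.derivativeFun H) h
      * psComp (∏ i ∈ Finset.range (k % ℓ), F i) h
      * psComp (∏ i ∈ Finset.range ℓ, F i) h ^ (k / ℓ) := by
    rw [hGdef, psComp_mul h0, psComp_mul h0]
    congr 1
    exact map_pow (psCompRH h h0) _ _
  have final : (PowerSeries.derivativeFun h * ∏ i ∈ Finset.range (k % ℓ), q i) * psComp G h
      = PowerSeries.derivativeFun (psComp H h)
        * (∏ i ∈ Finset.range (k % ℓ), (q i * psComp (F i) h))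
        * (∏ i ∈ Finset.range ℓ, (q i * psComp (F i) h)) ^ (k / ℓ) := by
    rw [c1, c2, c3, c4]; ring
  rw [final]
  simp only [mrEntry]
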